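/- If C is a clique of the 1-skeleton of the order polytope O(P) of a finite poset P, then the convex hull conv(C) is a face of O(P). -/

import Mathlib

open Set

variable {α : Type*} [Fintype α] [PartialOrder α]

/-- A poset ideal (down-set) of a poset. -/
def IsPosetIdeal (I : Set α) : Prop := ∀ ⦃a b : α⦄, a ≤ b → b ∈ I → a ∈ I

/-- The indicator vector of a subset. -/
noncomputable def rho (I : Set α) : α → ℝ := I.indicator 1

/-- The order polytope of a finite poset. -/
noncomputable def orderPolytope (α : Type*) [Fintype α] [PartialOrder α] : Set (α → ℝ) :=
  convexHull ℝ {x | ∃ I : Set α, IsPosetIdeal I ∧ x = rho I}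

/-- A subset of a poset is connected if the induced subgraph of the Hasse diagram is connected. -/
def ConnectedIn (S : Set α) : Prop := ((SimpleGraph.hasse α).induce S).Connected

/-- `conv {v, w}` is an edge (1-dimensional face) of the polytope `P`. -/
def IsEdgeOf (P : Set (α → ℝ)) (v w : α → ℝ) : Prop :=
  v ≠ w ∧ IsExtreme ℝ P (segment ℝ v w)

set_option linter.unusedSectionVars false

lemma rho_apply (I : Set α) (a : α) [Decidable (a ∈ I)] :
    rho I a = if a ∈ I then 1 else 0 := by
  unfold rho; rw [Set.indicator_apply]; split <;> simp

lemma rho_injective : Function.Injective (rho (α := α)) := by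
  intro I J h
  ext a
  classical
  have := congrFun h a
  rw [rho_apply, rho_apply] at this
  by_cases hI : a ∈ I <;> by_cases hJ : a ∈ J <;> simp [hI, hJ] at this ⊢

lemma rho_mem_polytope {I : Set α} (hI : IsPosetIdeal I) : rho I ∈ orderPolytope α :=
  subset_convexHull ℝ _ ⟨I, hI, rfl⟩

lemma seg_classify {I J K : Set α} (hIJ : I ≠ J)
    (h : rho K ∈ segment ℝ (rho I) (rho J)) : K = I ∨ K = J := by
  classical
  obtain ⟨s, t, hs, ht, hst, hK⟩ := h
  have hcoord : ∀ a : α, s * rho I a + t * rho J a = rho K a := by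
    intro a; have := congrFun hK a; simpa using this
  have hs1 : s = 1 → K = I := by
    intro h1
    have ht0 : t = 0 := by linarith
    refine rho_injective ?_
    funext a
    have := hcoord a
    rw [h1, ht0] at this
    linarith
  have ht1 : t = 1 → K = J := by
    intro h1
    have hs0 : s = 0 := by linarith
    refine rho_injective ?_
    funext a
    have := hcoord a
    rw [h1, hs0] at this
    linarith
  have hd : ∃ p, (p ∈ I ∧ p ∉ J) ∨ (p ∉ I ∧ p ∈ J) := by
    by_contra hc
    push_neg at hc
    exact hIJ (Set.ext fun p => by have := hc p; tauto)
  obtain ⟨p, hp | hp⟩ := hd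
  · have hv : rho K p = s := by
      have := hcoord p
      rw [rho_apply, rho_apply, if_pos hp.1, if_neg hp.2] at this
      linarith
    rw [rho_apply] at hv
    split at hv
    · exact Or.inl (hs1 hv.symm)
    · exact Or.inr (ht1 (by linarith))
  · have hv : rho K p = t := by
      have := hcoord p
      rw [rho_apply, rho_apply, if_neg hp.1, if_pos hp.2] at this
      linarith
    rw [rho_apply] at hv
    split at hv
    · exact Or.inr (ht1 hv.symm)
    · exact Or.inl (hs1 (by linarith))

lemma split_mem_segment {I J I1 I2 : Set α}
    (hext : IsExtreme ℝ (orderPolytope α) (segment ℝ (rho I) (rho J)))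
    (h1 : IsPosetIdeal I1) (h2 : IsPosetIdeal I2)
    (hsum : rho I1 + rho I2 = rho I + rho J) :
    rho I1 ∈ segment ℝ (rho I) (rho J) := by
  have hm : ((2:ℝ)⁻¹) • (rho I + rho J) ∈ segment ℝ (rho I) (rho J) :=
    ⟨2⁻¹, 2⁻¹, by norm_num, by norm_num, by norm_num, (smul_add _ _ _).symm⟩
  have hopen : ((2:ℝ)⁻¹) • (rho I + rho J) ∈ openSegment ℝ (rho I1) (rho I2) :=
    ⟨2⁻¹, 2⁻¹, by norm_num, by norm_num, by norm_num, by rw [← hsum, smul_add]⟩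
  exact hext.2 (rho_mem_polytope h1) (rho_mem_polytope h2) hm hopen

lemma subset_or_subset_of_edge {I J : Set α} (hI : IsPosetIdeal I) (hJ : IsPosetIdeal J)
    (hedge : IsEdgeOf (orderPolytope α) (rho I) (rho J)) : I ⊆ J ∨ J ⊆ I := by
  classical
  have hne : I ≠ J := fun h => hedge.1 (by rw [h])
  have hint : IsPosetIdeal (I ∩ J) := fun a b hab hb => ⟨hI hab hb.1, hJ hab hb.2⟩
  have huni : IsPosetIdeal (I ∪ J) := fun a b hab hb =>
    hb.elim (fun h => Or.inl (hI hab h)) (fun h => Or.inr (hJ hab h))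
  have hsum : rho (I ∩ J) + rho (I ∪ J) = rho I + rho J := by
    funext a
    simp only [Pi.add_apply, rho_apply]
    by_cases haI : a ∈ I <;> by_cases haJ : a ∈ J <;>
      simp [haI, haJ]
  have hseg := split_mem_segment hedge.2 hint huni hsum
  rcases seg_classify hne hseg with h | h
  · exact Or.inl (Set.inter_eq_left.mp h)
  · exact Or.inr (Set.inter_eq_right.mp h)

lemma le_of_reflTransGen_covBy {a b : α} (h : Relation.ReflTransGen (· ⋖ ·) a b) : a ≤ b := by
  induction h with
  | refl => exact le_refl _
  | tail _ h ih => exact ih.trans h.le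

lemma reflTransGen_covBy_of_le {a b : α} (h : a ≤ b) : Relation.ReflTransGen (· ⋖ ·) a b := by
  classical
  rcases eq_or_lt_of_le h with rfl | hlt
  · exact Relation.ReflTransGen.refl
  · letI : @DecidableRel α α (· < ·) := fun _ _ => Classical.propDecidable _
    letI : @DecidableRel α α (· ≤ ·) := fun _ _ => Classical.propDecidable _
    letI := Fintype.toLocallyFiniteOrder (α := α)
    exact (transGen_covBy_of_lt hlt).to_reflTransGen

lemma exists_cross {r : α → α → Prop} {Q : α → Prop} {a b : α}
    (h : Relation.ReflTransGen r a b) (ha : Q a) (hb : ¬ Q b) :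
    ∃ u v, r u v ∧ Q u ∧ ¬ Q v ∧ Relation.ReflTransGen r a u ∧ Relation.ReflTransGen r v b := by
  induction h with
  | refl => exact absurd ha hb
  | @tail c d hac hcd ih =>
    by_cases hQc : Q c
    · exact ⟨c, d, hcd, hQc, hb, hac, Relation.ReflTransGen.refl⟩
    · obtain ⟨u, v, h1, h2, h3, h4, h5⟩ := ih hQc
      exact ⟨u, v, h1, h2, h3, h4, h5.tail hcd⟩

lemma exists_cross_edge {I J J' : Set α} (hI : IsPosetIdeal I) (hJ : IsPosetIdeal J)
    (hJ' : IsPosetIdeal J') (hIJ : I ⊆ J)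
    (hedge : IsEdgeOf (orderPolytope α) (rho I) (rho J))
    (hY : ∃ y, y ∈ J ∧ y ∉ I ∧ y ∈ J') (hX : ∃ x, x ∈ J ∧ x ∉ I ∧ x ∉ J') :
    ∃ u v, u ⋖ v ∧ u ∈ J ∧ u ∉ I ∧ v ∈ J ∧ v ∉ I ∧ u ∈ J' ∧ v ∉ J' := by
  classical
  by_contra hcon
  push_neg at hcon
  -- hcon : ∀ u v, u ⋖ v → u ∈ J → u ∉ I → v ∈ J → v ∉ I → u ∈ J' → v ∈ J'
  have hId1 : IsPosetIdeal (I ∪ (J ∩ J')) := fun a b hab hb => by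
    rcases hb with h | h
    · exact Or.inl (hI hab h)
    · exact Or.inr ⟨hJ hab h.1, hJ' hab h.2⟩
  have hId2 : IsPosetIdeal (I ∪ (J \ J')) := by
    intro a b hab hb
    rcases hb with h | h
    · exact Or.inl (hI hab h)
    · have haJ : a ∈ J := hJ hab h.1
      by_cases haI : a ∈ I
      · exact Or.inl haI
      · refine Or.inr ⟨haJ, ?_⟩
        intro haJ'
        obtain ⟨u, v, huv, hQu, hQv, hau, hvb⟩ :=
          exists_cross (Q := (· ∈ J')) (reflTransGen_covBy_of_le hab) haJ' h.2
        have hale : a ≤ u := le_of_reflTransGen_covBy hau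
        have hvle : v ≤ b := le_of_reflTransGen_covBy hvb
        have hvJ : v ∈ J := hJ hvle h.1
        have huJ : u ∈ J := hJ (huv.le.trans hvle) h.1
        have huI : u ∉ I := fun hu => haI (hI hale hu)
        have hvI : v ∉ I := fun hv => haI (hI (hale.trans huv.le) hv)
        exact hQv (hcon u v huv huJ huI hvJ hvI hQu)
  obtain ⟨y, hyJ, hyI, hyJ'⟩ := hY
  obtain ⟨x, hxJ, hxI, hxJ'⟩ := hX
  have hsum : rho (I ∪ (J ∩ J')) + rho (I ∪ (J \ J')) = rho I + rho J := by
    funext a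
    simp only [Pi.add_apply, rho_apply]
    by_cases haI : a ∈ I
    · simp [haI, hIJ haI]
    · by_cases haJ : a ∈ J <;> by_cases haJ' : a ∈ J' <;> simp [haI, haJ, haJ']
  have hseg := split_mem_segment hedge.2 hId1 hId2 hsum
  have hne : I ≠ J := fun h => hedge.1 (by rw [h])
  rcases seg_classify hne hseg with h | h
  · have : y ∈ I := h ▸ (Or.inr ⟨hyJ, hyJ'⟩ : y ∈ I ∪ (J ∩ J'))
    exact hyI this
  · have : x ∈ I ∪ (J ∩ J') := h.symm ▸ hxJ
    rcases this with h' | h'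
    · exact hxI h'
    · exact hxJ' h'.2

noncomputable def phiL (FA FB : Finset α) (E : Finset (α × α)) : (α → ℝ) →ₗ[ℝ] ℝ where
  toFun x := (∑ a ∈ FA, x a) - (∑ a ∈ FB, x a) + ((∑ p ∈ E, x p.2) - (∑ p ∈ E, x p.1))
  map_add' x y := by
    simp only [Pi.add_apply, Finset.sum_add_distrib]
    ring
  map_smul' c x := by
    simp only [Pi.smul_apply, smul_eq_mul, ← Finset.mul_sum, RingHom.id_apply]
    ring

lemma phiL_apply (FA FB : Finset α) (E : Finset (α × α)) (x : α → ℝ) :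
    phiL FA FB E x = (∑ a ∈ FA, x a) - (∑ a ∈ FB, x a)
      + ((∑ p ∈ E, x p.2) - (∑ p ∈ E, x p.1)) := rfl

theorem clique_convexHull_isFace (C : Set (α → ℝ))
    (hvert : ∀ v ∈ C, v ∈ Set.extremePoints ℝ (orderPolytope α))
    (hclique : ∀ v ∈ C, ∀ w ∈ C, v ≠ w → IsEdgeOf (orderPolytope α) v w) :
    IsExtreme ℝ (orderPolytope α) (convexHull ℝ C) := by
  classical
  rcases C.eq_empty_or_nonempty with rfl | hCne
  · refine ⟨by simp, ?_⟩
    intro x1 _ x2 _ x hx _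
    simp at hx
  -- every element of C is the indicator of an ideal
  have hCsub : ∀ v ∈ C, ∃ I : Set α, (IsPosetIdeal I ∧ rho I ∈ C) ∧ v = rho I := by
    intro v hv
    have h1 : v ∈ {x : α → ℝ | ∃ I : Set α, IsPosetIdeal I ∧ x = rho I} := by
      have := hvert v hv
      rw [orderPolytope] at this
      exact extremePoints_convexHull_subset this
    obtain ⟨I, hI, rfl⟩ := h1
    exact ⟨I, ⟨hI, hv⟩, rfl⟩
  set 𝒞 : Set (Set α) := {I | IsPosetIdeal I ∧ rho I ∈ C} with h𝒞def
  have hchain : ∀ I ∈ 𝒞, ∀ J ∈ 𝒞, I ⊆ J ∨ J ⊆ I := by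
    intro I hI J hJ
    by_cases hIJ : I = J
    · exact Or.inl hIJ.le
    · have hne : rho I ≠ rho J := fun h => hIJ (rho_injective h)
      exact subset_or_subset_of_edge hI.1 hJ.1 (hclique _ hI.2 _ hJ.2 hne)
  have h𝒞ne : 𝒞.Nonempty := by
    obtain ⟨v, hv⟩ := hCne
    obtain ⟨I, hI, rfl⟩ := hCsub v hv
    exact ⟨I, hI⟩
  obtain ⟨Imin, hIminC, hIminmin⟩ :=
    Set.Finite.exists_minimalFor id 𝒞 (Set.toFinite _) h𝒞ne
  have hImin_le : ∀ I ∈ 𝒞, Imin ⊆ I := by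
    intro I hI
    rcases hchain _ hIminC _ hI with h | h
    · exact h
    · exact hIminmin hI h
  obtain ⟨Imax, hImaxC, hImaxmax⟩ :=
    Set.Finite.exists_maximalFor id 𝒞 (Set.toFinite _) h𝒞ne
  have hImax_ge : ∀ I ∈ 𝒞, I ⊆ Imax := by
    intro I hI
    rcases hchain _ hI _ hImaxC with h | h
    · exact h
    · exact hImaxmax hI h
  set FA : Finset α := Finset.univ.filter (· ∈ Imin) with hFA
  set FB : Finset α := Finset.univ.filter (· ∉ Imax) with hFB
  set E : Finset (α × α) :=
    Finset.univ.filter (fun p : α × α => p.1 ⋖ p.2 ∧ ∀ I ∈ 𝒞, (p.1 ∈ I ↔ p.2 ∈ I)) with hE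
  set φ : (α → ℝ) →ₗ[ℝ] ℝ := phiL FA FB E with hφdef
  set N : ℝ := (FA.card : ℝ) with hN
  -- basic bounds on vertex values
  have hb1 : ∀ J : Set α, (∑ a ∈ FA, rho J a) ≤ N := by
    intro J
    calc ∑ a ∈ FA, rho J a ≤ ∑ _a ∈ FA, (1:ℝ) :=
          Finset.sum_le_sum (fun a _ => by rw [rho_apply]; split <;> norm_num)
      _ = N := by simp [hN]
  have hb2 : ∀ J : Set α, (0:ℝ) ≤ ∑ a ∈ FB, rho J a :=
    fun J => Finset.sum_nonneg (fun a _ => by rw [rho_apply]; split <;> norm_num)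
  have hterm3 : ∀ J : Set α, IsPosetIdeal J → ∀ p ∈ E, rho J p.2 ≤ rho J p.1 := by
    intro J hJ p hp
    have hcov : p.1 ⋖ p.2 := ((Finset.mem_filter.mp hp).2).1
    by_cases h : p.2 ∈ J
    · have h1 : p.1 ∈ J := hJ hcov.le h
      rw [rho_apply, rho_apply, if_pos h, if_pos h1]
    · rw [rho_apply, rho_apply, if_neg h]
      split <;> norm_num
  have hb3 : ∀ J : Set α, IsPosetIdeal J → (∑ p ∈ E, rho J p.2) ≤ ∑ p ∈ E, rho J p.1 :=
    fun J hJ => Finset.sum_le_sum (hterm3 J hJ)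
  have hval_le : ∀ J : Set α, IsPosetIdeal J → φ (rho J) ≤ N := by
    intro J hJ
    rw [hφdef, phiL_apply]
    linarith [hb1 J, hb2 J, hb3 J hJ]
  have hval_eq_of_mem : ∀ J ∈ 𝒞, φ (rho J) = N := by
    intro J hJ
    rw [hφdef, phiL_apply]
    have e1 : ∑ a ∈ FA, rho J a = N := by
      rw [Finset.sum_congr rfl (g := fun _ => (1:ℝ))
        (fun a ha => by
          have haJ : a ∈ J := hImin_le J hJ ((Finset.mem_filter.mp ha).2)
          rw [rho_apply, if_pos haJ])]
      simp [hN]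
    have e2 : ∑ a ∈ FB, rho J a = 0 := by
      apply Finset.sum_eq_zero
      intro a ha
      have haJ : a ∉ J := fun h => ((Finset.mem_filter.mp ha).2) (hImax_ge J hJ h)
      rw [rho_apply, if_neg haJ]
    have e3 : ∑ p ∈ E, rho J p.2 = ∑ p ∈ E, rho J p.1 := by
      apply Finset.sum_congr rfl
      intro p hp
      have hiff : p.1 ∈ J ↔ p.2 ∈ J := ((Finset.mem_filter.mp hp).2).2 J hJ
      rw [rho_apply, rho_apply]
      exact if_congr hiff.symm rfl rfl
    rw [e1, e2, e3]; ring
  have hval_cond : ∀ J : Set α, IsPosetIdeal J → φ (rho J) = N →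
      Imin ⊆ J ∧ J ⊆ Imax ∧ ∀ p ∈ E, (p.1 ∈ J ↔ p.2 ∈ J) := by
    intro J hJ heq
    rw [hφdef, phiL_apply] at heq
    have e1 : ∑ a ∈ FA, rho J a = N := by linarith [hb1 J, hb2 J, hb3 J hJ]
    have e2 : ∑ a ∈ FB, rho J a = 0 := by linarith [hb1 J, hb2 J, hb3 J hJ]
    have e3 : ∑ p ∈ E, rho J p.1 = ∑ p ∈ E, rho J p.2 := by
      linarith [hb1 J, hb2 J, hb3 J hJ]
    refine ⟨?_, ?_, ?_⟩
    · intro a ha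
      have haFA : a ∈ FA := Finset.mem_filter.mpr ⟨Finset.mem_univ _, ha⟩
      have hzz : ∑ a ∈ FA, ((1:ℝ) - rho J a) = 0 := by
        rw [Finset.sum_sub_distrib, e1]
        simp [hN]
      have hterm := (Finset.sum_eq_zero_iff_of_nonneg
        (fun b _ => by rw [rho_apply]; split <;> norm_num)).mp hzz a haFA
      by_contra haJ
      rw [rho_apply, if_neg haJ] at hterm
      norm_num at hterm
    · intro a haJ
      by_contra haImax
      have haFB : a ∈ FB := Finset.mem_filter.mpr ⟨Finset.mem_univ _, haImax⟩
      have hterm := (Finset.sum_eq_zero_iff_of_nonneg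
        (fun b _ => by rw [rho_apply]; split <;> norm_num)).mp e2 a haFB
      rw [rho_apply, if_pos haJ] at hterm
      norm_num at hterm
    · intro p hp
      have hzz : ∑ p ∈ E, (rho J p.1 - rho J p.2) = 0 := by
        rw [Finset.sum_sub_distrib, e3]; ring
      have hterm := (Finset.sum_eq_zero_iff_of_nonneg
        (fun q hq => sub_nonneg.mpr (hterm3 J hJ q hq))).mp hzz p hp
      have hle : rho J p.1 = rho J p.2 := by linarith
      have hcov : p.1 ⋖ p.2 := ((Finset.mem_filter.mp hp).2).1
      constructor
      · intro h1
        by_contra h2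
        rw [rho_apply, rho_apply, if_pos h1, if_neg h2] at hle
        norm_num at hle
      · exact fun h2 => hJ hcov.le h2
  -- bound on the whole polytope
  have hboundP : ∀ x ∈ orderPolytope α, φ x ≤ N := by
    intro x hx
    have hsub : orderPolytope α ⊆ {y | φ y ≤ N} := by
      rw [orderPolytope]
      apply convexHull_min
      · rintro y ⟨J, hJ, rfl⟩
        exact hval_le J hJ
      · exact convex_halfSpace_le φ.isLinear N
    exact hsub hx
  set F : Set (α → ℝ) := orderPolytope α ∩ {x | φ x = N} with hFdef
  have hFext : IsExtreme ℝ (orderPolytope α) F := by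
    constructor
    · exact Set.inter_subset_left
    · intro x1 hx1 x2 hx2 x hxF hxseg
      obtain ⟨a, b, ha, hb, hab, hx⟩ := hxseg
      have h1 := hboundP x1 hx1
      have h2 := hboundP x2 hx2
      have hφx : a * φ x1 + b * φ x2 = N := by
        have : φ x = N := hxF.2
        rw [← this, ← hx]
        simp [map_add, map_smul, smul_eq_mul]
      have hz1 : a * (N - φ x1) = 0 := by nlinarith [mul_nonneg ha.le (sub_nonneg.mpr h1), mul_nonneg hb.le (sub_nonneg.mpr h2)]
      have hz2 : b * (N - φ x2) = 0 := by nlinarith [mul_nonneg ha.le (sub_nonneg.mpr h1), mul_nonneg hb.le (sub_nonneg.mpr h2)]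
      have hx1N : φ x1 = N := by
        rcases mul_eq_zero.mp hz1 with h | h
        · exact absurd h (ne_of_gt ha)
        · linarith
      have hx2N : φ x2 = N := by
        rcases mul_eq_zero.mp hz2 with h | h
        · exact absurd h (ne_of_gt hb)
        · linarith
      exact ⟨hx1, hx1N⟩
  -- the key combinatorial step
  have key : ∀ J : Set α, IsPosetIdeal J → Imin ⊆ J → J ⊆ Imax →
      (∀ p ∈ E, (p.1 ∈ J ↔ p.2 ∈ J)) → rho J ∈ C := by
    intro J hJ hminJ hJmax hEJ
    by_contra hJC
    obtain ⟨Im, hImS, hImmax⟩ := Set.Finite.exists_maximalFor id {I ∈ 𝒞 | I ⊆ J}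
      (Set.toFinite _) ⟨Imin, hIminC, hminJ⟩
    have hImC : Im ∈ 𝒞 := hImS.1
    have hImJ : Im ⊆ J := hImS.2
    have hImgreat : ∀ I ∈ 𝒞, I ⊆ J → I ⊆ Im := by
      intro I hI hIJ
      rcases hchain _ hI _ hImC with h | h
      · exact h
      · exact hImmax ⟨hI, hIJ⟩ h
    have hJIm : ¬ (J ⊆ Im) := by
      intro h
      have hJIm' : J = Im := subset_antisymm h hImJ
      exact hJC (hJIm' ▸ hImC.2)
    have hDmax : Imax ∈ {I ∈ 𝒞 | ¬ (J ∩ I ⊆ Im)} := by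
      refine ⟨hImaxC, fun h => hJIm ?_⟩
      intro a ha
      exact h ⟨ha, hJmax ha⟩
    obtain ⟨M, hMS, hMmin⟩ := Set.Finite.exists_minimalFor id {I ∈ 𝒞 | ¬ (J ∩ I ⊆ Im)}
      (Set.toFinite _) ⟨Imax, hDmax⟩
    have hMC : M ∈ 𝒞 := hMS.1
    have hMleast : ∀ I ∈ 𝒞, ¬ (J ∩ I ⊆ Im) → M ⊆ I := by
      intro I hI hID
      rcases hchain _ hMC _ hI with h | h
      · exact h
      · exact hMmin ⟨hI, hID⟩ h
    have hMJ : ¬ (M ⊆ J) := fun h => hMS.2 (fun a ha => hImgreat M hMC h ha.2)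
    have hImM : Im ⊆ M := by
      rcases hchain _ hImC _ hMC with h | h
      · exact h
      · exact absurd (fun a (ha : a ∈ J ∩ M) => h ha.2) hMS.2
    have hImMne : Im ≠ M := fun h => hMJ (h ▸ hImJ)
    obtain ⟨y, hyJM, hyIm⟩ := Set.not_subset.mp hMS.2
    obtain ⟨x0, hx0M, hx0J⟩ := Set.not_subset.mp hMJ
    have hedge : IsEdgeOf (orderPolytope α) (rho Im) (rho M) :=
      hclique _ hImC.2 _ hMC.2 (fun h => hImMne (rho_injective h))
    obtain ⟨u, v, huv, huM, huIm, hvM, hvIm, huJ, hvJ⟩ :=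
      exists_cross_edge hImC.1 hMC.1 hJ hImM hedge
        ⟨y, hyJM.2, hyIm, hyJM.1⟩
        ⟨x0, hx0M, fun hx0Im => hx0J (hImJ hx0Im), hx0J⟩
    have hnotE : ¬ (∀ I ∈ 𝒞, (u ∈ I ↔ v ∈ I)) := by
      intro hall
      have hpE : (u, v) ∈ E := Finset.mem_filter.mpr ⟨Finset.mem_univ _, huv, hall⟩
      exact hvJ ((hEJ _ hpE).mp huJ)
    push_neg at hnotE
    obtain ⟨I, hIC, hIiff⟩ := hnotE
    have huvI : u ∈ I ∧ v ∉ I := by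
      rcases hIiff with h | h
      · exact h
      · exact absurd (hIC.1 huv.le h.2) h.1
    have hID : ¬ (J ∩ I ⊆ Im) := fun h => huIm (h ⟨huJ, huvI.1⟩)
    exact huvI.2 (hMleast I hIC hID hvM)
  -- conv C = F
  have hCF : convexHull ℝ C = F := by
    apply Set.Subset.antisymm
    · apply convexHull_min _ ((convex_convexHull ℝ _).inter (convex_hyperplane φ.isLinear N))
      intro v hv
      obtain ⟨I, hI, rfl⟩ := hCsub v hv
      exact ⟨rho_mem_polytope hI.1, hval_eq_of_mem I hI⟩
    · intro x hxF
      have hx : x ∈ convexHull ℝ {y : α → ℝ | ∃ I : Set α, IsPosetIdeal I ∧ y = rho I} := by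
        have := hxF.1
        rwa [orderPolytope] at this
      rw [convexHull_eq] at hx
      obtain ⟨ι, t, w, z, hw0, hw1, hz, hcm⟩ := hx
      have hzle : ∀ i ∈ t, φ (z i) ≤ N := by
        intro i hi
        obtain ⟨J, hJ, hzi⟩ := hz i hi
        rw [hzi]
        exact hval_le J hJ
      have hxz : x = ∑ i ∈ t, w i • z i := by
        rw [← hcm, Finset.centerMass_eq_of_sum_1 _ _ hw1]
      have hφx : ∑ i ∈ t, w i * φ (z i) = N := by
        have h1 : φ x = N := hxF.2
        rw [hxz, map_sum] at h1
        simpa [map_smul, smul_eq_mul] using h1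
      have hsum0 : ∑ i ∈ t, w i * (N - φ (z i)) = 0 := by
        have : ∑ i ∈ t, w i * (N - φ (z i))
            = (∑ i ∈ t, w i * N) - ∑ i ∈ t, w i * φ (z i) := by
          rw [← Finset.sum_sub_distrib]
          exact Finset.sum_congr rfl (fun i _ => by ring)
        rw [this, ← Finset.sum_mul, hw1, hφx]
        ring
      have hzero := (Finset.sum_eq_zero_iff_of_nonneg
        (fun i hi => mul_nonneg (hw0 i hi) (sub_nonneg.mpr (hzle i hi)))).mp hsum0
      have hzC : ∀ i ∈ t, w i ≠ 0 → z i ∈ C := by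
        intro i hi hwi
        obtain ⟨J, hJ, hzi⟩ := hz i hi
        have hNi : φ (z i) = N := by
          rcases mul_eq_zero.mp (hzero i hi) with h | h
          · exact absurd h hwi
          · linarith
        rw [hzi] at hNi ⊢
        obtain ⟨c1, c2, c3⟩ := hval_cond J hJ hNi
        exact key J hJ c1 c2 c3
      rw [← hcm, ← Finset.centerMass_filter_ne_zero]
      apply Finset.centerMass_mem_convexHull
      · intro i hi
        exact hw0 i (Finset.mem_filter.mp hi).1
      · rw [Finset.sum_filter_ne_zero, hw1]
        norm_num
      · intro i hi
        obtain ⟨hit, hwi⟩ := Finset.mem_filter.mp hi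
        exact hzC i hit hwi
  rw [hCF]
  exact hFext
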